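/- Let V be a real inner product space equipped with three linear maps I, J, K : V → V satisfying I² = J² = K² = −id and IJ = −JI = K, each preserving the inner product (⟨Ix, Iy⟩ = ⟨Jx, Jy⟩ = ⟨Kx, Ky⟩ = ⟨x, y⟩ for all x, y). For a linear map Θ : V → V define ω_Θ(x,y) := ⟨Θx, y⟩. Let x₀, y₀ ∈ ℝ with x₀² + y₀² = 1, set Θ₀ = x₀·J + y₀·K, and let A : ℝ² → V be a real-linear map with Ae₂ = Θ₀(Ae₁). Then for all x, y ∈ ℝ, ω_{x·J + y·K}(Ae₁, Ae₂) = (x·x₀ + y·y₀)·‖Ae₁‖². Consequently, on the circle {(x,y) : x² + y² = 1} the quantity ω_{x·J+y·K}(Ae₁, Ae₂) is at most ‖Ae₁‖², with equality exactly at (x,y) = (x₀, y₀); and if A ≠ 0 this maximum is strictly positive and attained only there. -/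

import Mathlib

/-- **Quaternionic pointwise identity underlying the main theorem of
Solomon–Verbitsky** (Theorem 1.5). Let `(I, J, K)` be a quaternionic triple of
orthogonal complex structures on a real inner product space `V`, and for a linear map
`Θ` set `ω_Θ(x,y) = ⟨Θx, y⟩`. Let `x₀² + y₀² = 1`, `Θ₀ = x₀J + y₀K`, and let
`A : ℝ² → V` be real-linear with `Ae₂ = Θ₀(Ae₁)`. Then
`ω_{xJ+yK}(Ae₁, Ae₂) = (xx₀ + yy₀)·‖Ae₁‖²` for all `x, y`; on the unit circle this is
`≤ ‖Ae₁‖²`, with equality at `(x₀, y₀)`; and if `A ≠ 0` the maximum is strictly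
positive and attained only at `(x₀, y₀)`. -/
theorem twistor_circle_maximum
    {V : Type*} [NormedAddCommGroup V] [InnerProductSpace ℝ V]
    (I J K : V →ₗ[ℝ] V)
    (hI2 : ∀ v, I (I v) = -v) (hJ2 : ∀ v, J (J v) = -v) (hK2 : ∀ v, K (K v) = -v)
    (hIJ : ∀ v, I (J v) = K v) (hJI : ∀ v, J (I v) = -(K v))
    (hIinner : ∀ x y : V, (inner ℝ (I x) (I y) : ℝ) = inner ℝ x y)
    (hJinner : ∀ x y : V, (inner ℝ (J x) (J y) : ℝ) = inner ℝ x y)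
    (hKinner : ∀ x y : V, (inner ℝ (K x) (K y) : ℝ) = inner ℝ x y)
    (x₀ y₀ : ℝ) (hxy : x₀ ^ 2 + y₀ ^ 2 = 1)
    (A : (ℝ × ℝ) →ₗ[ℝ] V)
    (hA : A (0, 1) = (x₀ • J + y₀ • K) (A (1, 0))) :
    (∀ x y : ℝ, (inner ℝ ((x • J + y • K) (A (1, 0))) (A (0, 1)) : ℝ)
        = (x * x₀ + y * y₀) * ‖A (1, 0)‖ ^ 2) ∧
    (∀ x y : ℝ, x ^ 2 + y ^ 2 = 1 →
        (inner ℝ ((x • J + y • K) (A (1, 0))) (A (0, 1)) : ℝ) ≤ ‖A (1, 0)‖ ^ 2) ∧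
    ((inner ℝ ((x₀ • J + y₀ • K) (A (1, 0))) (A (0, 1)) : ℝ) = ‖A (1, 0)‖ ^ 2) ∧
    (A ≠ 0 →
      (0 : ℝ) < ‖A (1, 0)‖ ^ 2 ∧
      ∀ x y : ℝ, x ^ 2 + y ^ 2 = 1 →
        (inner ℝ ((x • J + y • K) (A (1, 0))) (A (0, 1)) : ℝ) = ‖A (1, 0)‖ ^ 2 →
        (x, y) = (x₀, y₀)) := by

  set v := A (1, 0) with hv
  have horth : (inner ℝ (J v) (K v) : ℝ) = 0 := by
    have h1 : (inner ℝ (I (J v)) (I (I (J v))) : ℝ) = inner ℝ (J v) (I (J v)) := hIinner _ _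
    rw [hI2, inner_neg_right, real_inner_comm (I (J v))] at h1
    have h3 : (inner ℝ (J v) (I (J v)) : ℝ) = 0 := by rw [real_inner_comm]; linarith
    rw [← hIJ]
    exact h3
  have hJJ : (inner ℝ (J v) (J v) : ℝ) = ‖v‖ ^ 2 := by
    rw [hJinner, real_inner_self_eq_norm_sq]
  have hKK : (inner ℝ (K v) (K v) : ℝ) = ‖v‖ ^ 2 := by
    rw [hKinner, real_inner_self_eq_norm_sq]
  have horth' : (inner ℝ (K v) (J v) : ℝ) = 0 := by rw [real_inner_comm]; exact horth
  have hmain : ∀ x y : ℝ, (inner ℝ ((x • J + y • K) v) (A (0, 1)) : ℝ)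
      = (x * x₀ + y * y₀) * ‖v‖ ^ 2 := by
    intro x y
    rw [hA]
    simp only [LinearMap.add_apply, LinearMap.smul_apply, inner_add_left, inner_add_right,
      real_inner_smul_left, real_inner_smul_right, hJJ, hKK, horth, horth']
    ring
  refine ⟨hmain, ?_, ?_, ?_⟩
  · intro x y h
    rw [hmain]
    have hle : x * x₀ + y * y₀ ≤ 1 := by nlinarith [sq_nonneg (x - x₀), sq_nonneg (y - y₀)]
    nlinarith [sq_nonneg (‖v‖), sq_nonneg (x * x₀ + y * y₀ - 1)]
  · rw [hmain]; nlinarith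
  · intro hAne
    have hvne : v ≠ 0 := by
      intro h0
      apply hAne
      have hw : A (0, 1) = 0 := by rw [hA, h0]; simp
      have h0' : A (1, 0) = 0 := by rw [← hv]; exact h0
      apply LinearMap.ext
      intro p
      have hp : (p : ℝ × ℝ) = p.1 • ((1 : ℝ), (0 : ℝ)) + p.2 • ((0 : ℝ), (1 : ℝ)) := by
        simp [Prod.ext_iff]
      rw [hp, map_add, map_smul, map_smul, h0', hw]
      simp
    have hpos : (0 : ℝ) < ‖v‖ ^ 2 := pow_pos (norm_pos_iff.mpr hvne) 2
    refine ⟨hpos, ?_⟩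
    intro x y h heq
    rw [hmain] at heq
    have h1 : x * x₀ + y * y₀ = 1 := by
      have := mul_right_cancel₀ (ne_of_gt hpos) (by linarith [heq] : (x * x₀ + y * y₀) * ‖v‖ ^ 2 = 1 * ‖v‖ ^ 2)
      exact this
    have hx : x = x₀ ∧ y = y₀ := by constructor <;> nlinarith [sq_nonneg (x - x₀), sq_nonneg (y - y₀)]
    simp [hx.1, hx.2]
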